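/- For all natural numbers n ≥ k and every integer-valued polynomial P of degree ≤ n, the polynomial q_{n,k}·P^{(k)} is integer-valued, where q_{n,k} := lcm{ i_1⋯i_k : i_1,...,i_k ≥ 1, i_1 + ⋯ + i_k ≤ n }. -/

import Mathlib

open Polynomial

/-- A polynomial `P ∈ ℚ[X]` is integer-valued if it takes integer values at all integers. -/
def IntValued (P : Polynomial ℚ) : Prop := ∀ m : ℤ, ∃ z : ℤ, P.eval (m : ℚ) = (z : ℚ)

/-- `q n k` is the lcm of all products `i₁⋯i_k` over `k`-tuples of positive integers
with `i₁ + ⋯ + i_k ≤ n` (with `q n 0 = 1`). -/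
def q (n k : ℕ) : ℕ :=
  ((Finset.range (n + 1)).biUnion
      (fun m => (Finset.Nat.antidiagonalTuple k m).filter (fun f => ∀ j, f j ≠ 0))).lcm
    (fun f => ∏ j, f j)

/-! ### Auxiliary machinery -/

/-- The forward difference operator. -/
noncomputable def Δ : Polynomial ℚ →ₗ[ℚ] Polynomial ℚ where
  toFun P := P.comp (X + 1) - P
  map_add' P Q := by simp [add_comp]; ring
  map_smul' c P := by simp [smul_comp, smul_sub]

lemma Δ_apply (P : Polynomial ℚ) : Δ P = P.comp (X + 1) - P := rfl

lemma Δ_C (a : ℚ) : Δ (C a) = 0 := by simp [Δ_apply]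

lemma Δ_pow_succ (d : ℕ) (P : Polynomial ℚ) : (Δ ^ (d + 1)) P = (Δ ^ d) (Δ P) := by
  rw [pow_succ, Module.End.mul_apply]

lemma eval_Δ (P : Polynomial ℚ) (m : ℚ) : (Δ P).eval m = P.eval (m + 1) - P.eval m := by
  simp [Δ_apply, eval_comp]

lemma intValued_Δ {P : Polynomial ℚ} (hP : IntValued P) : IntValued (Δ P) := by
  intro m
  obtain ⟨z1, hz1⟩ := hP (m + 1)
  obtain ⟨z0, hz0⟩ := hP m
  exact ⟨z1 - z0, by rw [eval_Δ]; push_cast [← hz1, ← hz0]; ring⟩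

lemma intValued_Δpow {P : Polynomial ℚ} (hP : IntValued P) (s : ℕ) : IntValued ((Δ ^ s) P) := by
  induction s with
  | zero => simpa using hP
  | succ s ih => rw [pow_succ', Module.End.mul_apply]; exact intValued_Δ ih

lemma natDegree_Δ_le {P : Polynomial ℚ} {m : ℕ} (h : P.natDegree ≤ m + 1) :
    (Δ P).natDegree ≤ m := by
  rcases eq_or_ne (Δ P) 0 with h0 | h0
  · simp [h0]
  have hP0 : P ≠ 0 := by
    rintro rfl
    simp [Δ_apply] at h0
  have hq : (X + 1 : ℚ[X]).natDegree = 1 := by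
    simpa using natDegree_X_add_C (1 : ℚ)
  have hlc1 : (X + 1 : ℚ[X]).leadingCoeff = 1 := by
    simpa using (monic_X_add_C (1 : ℚ)).leadingCoeff
  have hlc : (P.comp (X + 1)).leadingCoeff = P.leadingCoeff := by
    rw [leadingCoeff_comp (by rw [hq]; norm_num), hlc1, one_pow, mul_one]
  have hcne : P.comp (X + 1) ≠ 0 := by
    intro hc
    apply hP0
    rw [← leadingCoeff_eq_zero, ← hlc, hc, leadingCoeff_zero]
  have hdeq : (P.comp (X + 1)).degree = P.degree := by
    rw [degree_eq_natDegree hcne, degree_eq_natDegree hP0, natDegree_comp, hq, mul_one]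
  have hlt : (Δ P).degree < P.degree := by
    rw [Δ_apply, ← hdeq]
    exact degree_sub_lt hdeq hcne hlc
  have := natDegree_lt_natDegree h0 hlt
  omega

lemma Δpow_eq_zero {P : Polynomial ℚ} {m : ℕ} (h : P.natDegree ≤ m) :
    (Δ ^ (m + 1)) P = 0 := by
  induction m generalizing P with
  | zero =>
    obtain ⟨a, rfl⟩ := natDegree_eq_zero.mp (Nat.le_zero.mp h)
    rw [pow_one, Δ_C]
  | succ m ih =>
    rw [Δ_pow_succ]
    exact ih (natDegree_Δ_le h)

lemma natDegree_Δpow_le {P : Polynomial ℚ} {m : ℕ} (h : P.natDegree ≤ m) (s : ℕ) :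
    ((Δ ^ s) P).natDegree ≤ m := by
  induction s generalizing P with
  | zero => simpa using h
  | succ s ih =>
    rw [Δ_pow_succ]
    exact ih (natDegree_Δ_le (h.trans (Nat.le_succ m)))

lemma Δpow_eq_zero' {P : Polynomial ℚ} {m s : ℕ} (h : P.natDegree ≤ m) (hs : m < s) :
    (Δ ^ s) P = 0 := by
  obtain ⟨t, rfl⟩ : ∃ t, s = t + (m + 1) := ⟨s - (m + 1), by omega⟩
  rw [pow_add, Module.End.mul_apply, Δpow_eq_zero h, map_zero]

lemma Δ_const {Q : Polynomial ℚ} (h : Δ Q = 0) : ∃ a, Q = C a := by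
  have step : ∀ x : ℚ, Q.eval (x + 1) = Q.eval x := by
    intro x
    have := congrArg (eval x) h
    rw [eval_Δ, eval_zero, sub_eq_zero] at this
    exact this
  have key : ∀ t : ℕ, Q.eval (t : ℚ) = Q.eval 0 := by
    intro t
    induction t with
    | zero => norm_num
    | succ t ih => push_cast; rw [step, ih]
  refine ⟨Q.eval 0, ?_⟩
  have h0 : Q - C (Q.eval 0) = 0 := by
    apply eq_zero_of_infinite_isRoot
    apply Set.infinite_of_injective_forall_mem (f := fun t : ℕ => (t : ℚ))
      (fun a b hab => Nat.cast_injective hab)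
    intro t
    simp [IsRoot, key t]
  linear_combination (norm := ring_nf) h0

lemma Δ_derivative (P : Polynomial ℚ) : Δ (derivative P) = derivative (Δ P) := by
  simp [Δ_apply, derivative_comp]

/-- Scaled binomial polynomial. -/
noncomputable def B (j : ℕ) : Polynomial ℚ := ((j.factorial : ℚ))⁻¹ • descPochhammer ℚ j

noncomputable def cc (d : ℕ) : ℚ := (-1) ^ (d - 1) / d

/-- The operator which should vanish on degree ≤ n. -/
noncomputable def E (n : ℕ) : Polynomial ℚ →ₗ[ℚ] Polynomial ℚ :=
  Polynomial.derivative - ∑ d ∈ Finset.Icc 1 n, cc d • (Δ ^ d)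

lemma E_apply (n : ℕ) (P : Polynomial ℚ) :
    E n P = derivative P - ∑ d ∈ Finset.Icc 1 n, cc d • (Δ ^ d) P := by
  simp [E]

lemma Δ_descPochhammer (j : ℕ) :
    Δ (descPochhammer ℚ (j + 1)) = ((j : ℚ) + 1) • descPochhammer ℚ j := by
  rw [Δ_apply]
  have h1 : (descPochhammer ℚ (j + 1)).comp (X + 1) = (X + 1) * descPochhammer ℚ j := by
    rw [descPochhammer_succ_left, mul_comp, X_comp, comp_assoc, sub_comp, X_comp, one_comp,
      add_sub_cancel_right, comp_X]
  rw [h1, smul_eq_C_mul]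
  rw [descPochhammer_succ_right]
  have : (C ((j : ℚ) + 1)) = ((j : ℚ[X]) + 1) := by push_cast; simp
  rw [this]
  ring

lemma Δ_B (j : ℕ) : Δ (B (j + 1)) = B j := by
  rw [B, map_smul, Δ_descPochhammer, smul_smul, B]
  congr 1
  have h1 : ((j + 1).factorial : ℚ) ≠ 0 := Nat.cast_ne_zero.mpr (Nat.factorial_ne_zero _)
  have h2 : (j.factorial : ℚ) ≠ 0 := Nat.cast_ne_zero.mpr (Nat.factorial_ne_zero _)
  rw [Nat.factorial_succ]
  push_cast
  field_simp

lemma B_zero : B 0 = C 1 := by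
  simp [B, descPochhammer_zero]

lemma Δpow_B (d j : ℕ) : (Δ ^ d) (B j) = if d ≤ j then B (j - d) else 0 := by
  induction d generalizing j with
  | zero => simp
  | succ d ih =>
    rw [Δ_pow_succ]
    match j with
    | 0 =>
      rw [B_zero, Δ_C, map_zero]
      simp
    | (t + 1) =>
      rw [Δ_B, ih]
      have : d + 1 ≤ t + 1 ↔ d ≤ t := by omega
      simp only [this]
      rw [Nat.succ_sub_succ]

lemma B_eval_zero (j : ℕ) : (B j).eval 0 = if j = 0 then 1 else 0 := by
  rw [B, eval_smul, descPochhammer_eval_zero]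
  split
  · next h => subst h; simp
  · simp

lemma descPochhammer_eval_neg_one (j : ℕ) :
    (descPochhammer ℚ j).eval (-1) = (-1) ^ j * j.factorial := by
  induction j with
  | zero => simp
  | succ j ih =>
    rw [descPochhammer_succ_eval, ih, Nat.factorial_succ]
    push_cast
    ring

lemma deriv_B_eval_zero (j : ℕ) :
    (derivative (B (j + 1))).eval 0 = (-1) ^ j / (j + 1) := by
  rw [B, derivative_smul, eval_smul, descPochhammer_succ_left, derivative_mul, derivative_X,
    one_mul, eval_add, eval_mul, eval_X, zero_mul, add_zero, eval_comp, eval_sub, eval_X,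
    eval_one, zero_sub, descPochhammer_eval_neg_one]
  have h1 : ((j + 1).factorial : ℚ) ≠ 0 := Nat.cast_ne_zero.mpr (Nat.factorial_ne_zero _)
  have h3 : ((j : ℚ) + 1) ≠ 0 := by positivity
  rw [Nat.factorial_succ, smul_eq_mul]
  push_cast
  field_simp

lemma natDegree_B_le (j : ℕ) : (B j).natDegree ≤ j := by
  refine (natDegree_smul_le _ _).trans ?_
  rw [descPochhammer_natDegree]

lemma coeff_B_self (j : ℕ) : (B j).coeff j = ((j.factorial : ℚ))⁻¹ := by
  rw [B, coeff_smul]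
  have h := (monic_descPochhammer ℚ j).coeff_natDegree
  rw [descPochhammer_natDegree] at h
  rw [h, smul_eq_mul, mul_one]

lemma Δpow_C (a : ℚ) {d : ℕ} (hd : d ≠ 0) : (Δ ^ d) (C a) = 0 := by
  obtain ⟨e, rfl⟩ : ∃ e, d = e + 1 := ⟨d - 1, by omega⟩
  rw [Δ_pow_succ, Δ_C, map_zero]

lemma E_C (n : ℕ) (a : ℚ) : E n (C a) = 0 := by
  rw [E_apply, derivative_C, zero_sub, neg_eq_zero]
  apply Finset.sum_eq_zero
  intro d hd
  rw [Δpow_C a (by have := (Finset.mem_Icc.mp hd).1; omega), smul_zero]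

lemma Δ_E_comm (n : ℕ) (P : Polynomial ℚ) : Δ (E n P) = E n (Δ P) := by
  rw [E_apply, E_apply, map_sub, Δ_derivative, map_sum]
  congr 1
  apply Finset.sum_congr rfl
  intro d _
  rw [map_smul]
  congr 1
  rw [show Δ ((Δ ^ d) P) = (Δ ^ (d + 1)) P from by rw [pow_succ', Module.End.mul_apply],
    Δ_pow_succ]

lemma E_B (n : ℕ) : ∀ j, j ≤ n → E n (B j) = 0 := by
  intro j
  induction j using Nat.strong_induction_on with
  | _ j ih =>
  match j with
  | 0 => intro _; rw [B_zero, E_C]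
  | (m + 1) =>
    intro hj
    have hΔ : Δ (E n (B (m + 1))) = 0 := by
      rw [Δ_E_comm, Δ_B, ih m (Nat.lt_succ_self m) (by omega)]
    obtain ⟨a, ha⟩ := Δ_const hΔ
    have ha' : a = (E n (B (m + 1))).eval 0 := by rw [ha, eval_C]
    have hval : (E n (B (m + 1))).eval 0 = 0 := by
      rw [E_apply, eval_sub, eval_finset_sum, deriv_B_eval_zero]
      have hsum : (∑ d ∈ Finset.Icc 1 n, ((cc d • (Δ ^ d) (B (m + 1))).eval 0))
          = (-1) ^ m / (m + 1) := by
        rw [Finset.sum_eq_single (m + 1)]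
        · rw [eval_smul, Δpow_B, if_pos le_rfl, Nat.sub_self, B_eval_zero, if_pos rfl, cc,
            smul_eq_mul, mul_one, Nat.add_sub_cancel]
          push_cast
          ring
        · intro d hd hne
          rw [eval_smul, Δpow_B]
          split
          · next hle =>
            rw [B_eval_zero, if_neg (by omega), smul_zero]
          · rw [eval_zero, smul_zero]
        · intro hnotmem
          exact absurd (Finset.mem_Icc.mpr ⟨by omega, hj⟩) hnotmem
      rw [hsum]
      ring
    rw [ha, show a = 0 from by rw [ha', hval], C_0]

lemma E_zero (n : ℕ) : ∀ j (P : Polynomial ℚ), P.natDegree ≤ j → j ≤ n → E n P = 0 := by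
  intro j
  induction j with
  | zero =>
    intro P hP _
    obtain ⟨a, rfl⟩ := natDegree_eq_zero.mp (Nat.le_zero.mp hP)
    exact E_C n a
  | succ j ih =>
    intro P hP hj
    rcases le_or_gt P.natDegree j with h | h
    · exact ih P h (by omega)
    have hdeg : P.natDegree = j + 1 := le_antisymm hP h
    set c : ℚ := P.coeff (j + 1) * (j + 1).factorial with hc
    have hR : (P - c • B (j + 1)).natDegree ≤ j := by
      rw [natDegree_le_iff_coeff_eq_zero]
      intro N hN
      rw [coeff_sub, coeff_smul]
      rcases eq_or_lt_of_le (show j + 1 ≤ N by omega) with rfl | hN2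
      · rw [coeff_B_self, hc, smul_eq_mul]
        have hfac : ((j + 1).factorial : ℚ) ≠ 0 := Nat.cast_ne_zero.mpr (Nat.factorial_ne_zero _)
        field_simp
        ring
      · rw [coeff_eq_zero_of_natDegree_lt (by omega : P.natDegree < N),
          coeff_eq_zero_of_natDegree_lt (lt_of_le_of_lt (natDegree_B_le _) hN2), smul_zero,
          sub_zero]
    have hsplit : P = (P - c • B (j + 1)) + c • B (j + 1) := by module
    rw [hsplit, map_add, map_smul, ih _ hR (by omega), E_B n (j + 1) hj, smul_zero, add_zero]

/-- derivative identity -/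
lemma derivative_eq_sum (n : ℕ) (P : Polynomial ℚ) (h : P.natDegree ≤ n) :
    derivative P = ∑ d ∈ Finset.Icc 1 n, cc d • (Δ ^ d) P := by
  have := E_zero n n P h le_rfl
  rw [E_apply] at this
  linear_combination (norm := module) this

/-- generators -/
def S (n k : ℕ) (P : Polynomial ℚ) : Set (Polynomial ℚ) :=
  { Q | ∃ f : Fin k → ℕ, (∀ i, f i ≠ 0) ∧ (∑ i, f i ≤ n) ∧
      Q = ((∏ i, (f i : ℚ))⁻¹) • ((Δ ^ (∑ i, f i)) P) }

lemma span_mem (n k : ℕ) (P : Polynomial ℚ) (h : P.natDegree ≤ n) :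
    derivative^[k] P ∈ Submodule.span ℤ (S n k P) := by
  induction k with
  | zero =>
    apply Submodule.subset_span
    refine ⟨Fin.elim0, fun i => i.elim0, by simp, by simp⟩
  | succ k ih =>
    rw [Function.iterate_succ_apply']
    refine Submodule.span_induction
      (p := fun x _ => derivative x ∈ Submodule.span ℤ (S n (k + 1) P)) ?_ ?_ ?_ ?_ ih
    · rintro x ⟨f, hf0, hfs, rfl⟩
      rw [derivative_smul,
        derivative_eq_sum n _ (natDegree_Δpow_le h _), Finset.smul_sum]
      apply Submodule.sum_mem
      intro d hd
      have hd1 : 1 ≤ d := (Finset.mem_Icc.mp hd).1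
      by_cases hds : d + ∑ i, f i ≤ n
      · have hmem : ((∏ i, ((Fin.cons d f : Fin (k + 1) → ℕ) i : ℚ))⁻¹) •
            ((Δ ^ (∑ i, (Fin.cons d f : Fin (k + 1) → ℕ) i)) P) ∈ S n (k + 1) P := by
          refine ⟨Fin.cons d f, ?_, ?_, rfl⟩
          · intro i
            refine Fin.cases ?_ ?_ i
            · simpa using by omega
            · exact hf0
          · rw [Fin.sum_cons]; exact hds
        have key : (∏ i, (f i : ℚ))⁻¹ • cc d • (Δ ^ d) ((Δ ^ (∑ i, f i)) P)
            = ((-1 : ℤ) ^ (d - 1)) • (((∏ i, ((Fin.cons d f : Fin (k + 1) → ℕ) i : ℚ))⁻¹) •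
              ((Δ ^ (∑ i, (Fin.cons d f : Fin (k + 1) → ℕ) i)) P)) := by
          rw [← Int.cast_smul_eq_zsmul ℚ, smul_smul, smul_smul]
          have hΔ : (Δ ^ d) ((Δ ^ (∑ i, f i)) P) = (Δ ^ (∑ i, (Fin.cons d f : Fin (k+1) → ℕ) i)) P := by
            rw [Fin.sum_cons, ← Module.End.mul_apply, ← pow_add]
          rw [hΔ]
          congr 1
          have hp : (∏ i : Fin (k + 1), (((Fin.cons d f : Fin (k + 1) → ℕ) i : ℕ) : ℚ))
              = (d : ℚ) * ∏ i : Fin k, ((f i : ℕ) : ℚ) := by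
            rw [← Nat.cast_prod, Fin.prod_cons]
            push_cast
            ring
          rw [hp, cc, mul_inv]
          push_cast
          ring
        rw [key]
        exact Submodule.smul_mem _ _ (Submodule.subset_span hmem)
      · have hz : (Δ ^ (d + ∑ i, f i)) P = 0 := Δpow_eq_zero' h (by omega)
        have : (Δ ^ d) ((Δ ^ (∑ i, f i)) P) = 0 := by
          rw [← Module.End.mul_apply, ← pow_add, hz]
        rw [this, smul_zero, smul_zero]
        exact Submodule.zero_mem _
    · show derivative 0 ∈ _
      rw [map_zero]; exact Submodule.zero_mem _
    · intro x y _ _ hx hy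
      show derivative (x + y) ∈ _
      rw [map_add]; exact Submodule.add_mem _ hx hy
    · intro a x _ hx
      show derivative (a • x) ∈ _
      rw [map_zsmul]
      exact Submodule.smul_mem _ a hx

theorem q_mul_iterated_derivative_intValued (n k : ℕ) (hkn : k ≤ n)
    (P : Polynomial ℚ) (hP : IntValued P) (hdeg : P.natDegree ≤ n) :
    IntValued (C ((q n k : ℕ) : ℚ) * derivative^[k] P) := by
  refine Submodule.span_induction
    (p := fun x _ => IntValued (C ((q n k : ℕ) : ℚ) * x)) ?_ ?_ ?_ ?_ (span_mem n k P hdeg)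
  · rintro x ⟨f, hf0, hfs, rfl⟩
    have hdvd : (∏ i, f i) ∣ q n k := by
      apply Finset.dvd_lcm
      rw [Finset.mem_biUnion]
      refine ⟨∑ i, f i, Finset.mem_range.mpr (by omega), ?_⟩
      rw [Finset.mem_filter]
      exact ⟨Finset.Nat.mem_antidiagonalTuple.mpr rfl, hf0⟩
    obtain ⟨t, ht⟩ := hdvd
    have hprodne : (∏ i, (f i : ℚ)) ≠ 0 := by
      apply Finset.prod_ne_zero_iff.mpr
      intro i _
      exact_mod_cast Nat.cast_ne_zero.mpr (hf0 i)
    have heq : C ((q n k : ℕ) : ℚ) * ((∏ i, (f i : ℚ))⁻¹ • ((Δ ^ (∑ i, f i)) P))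
        = ((t : ℚ)) • ((Δ ^ (∑ i, f i)) P) := by
      rw [← smul_eq_C_mul, smul_smul, ht]
      congr 1
      push_cast
      field_simp
    rw [heq]
    intro m
    obtain ⟨z, hz⟩ := intValued_Δpow hP (∑ i, f i) m
    exact ⟨t * z, by rw [eval_smul, hz, smul_eq_mul]; push_cast; ring⟩
  · intro m
    exact ⟨0, by simp⟩
  · intro x y _ _ hx hy
    intro m
    obtain ⟨z1, hz1⟩ := hx m
    obtain ⟨z2, hz2⟩ := hy m
    exact ⟨z1 + z2, by rw [mul_add, eval_add, hz1, hz2]; push_cast; ring⟩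
  · intro a x _ hx
    intro m
    obtain ⟨z, hz⟩ := hx m
    refine ⟨a * z, ?_⟩
    rw [← Int.cast_smul_eq_zsmul ℚ, mul_smul_comm, eval_smul, hz, smul_eq_mul]
    push_cast
    ring
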